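/- arXiv:0903.1082 — 2 statements merged into one kernel-verified Lean document; each statement's English description precedes it below -/
import Mathlib

section
/- Let Λ = {λ_k}_{k∈ℤ} ⊂ ℝ with λ_{k+1} - λ_k ≥ T for all k, and suppose Λ is a set of sampling for PW([-Ω/2,Ω/2]), i.e. ‖f‖²_{L²} ≍ Σ_n |f(λ_n)|² for all f ∈ PW([-Ω/2,Ω/2]). Then for every h ∈ L²(ℝ²) with supp h(·,x) ⊆ [0,T] and h(t,·) ∈ PW([-Ω/2,Ω/2]) for a.e. t, one has ‖h‖²_{L²(ℝ²)} ≍ ‖g‖²_{L²(ℝ)}, where g(x) = Σ_k h(x - λ_k, x). -/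
open MeasureTheory Complex Real
open scoped ENNReal NNReal

noncomputable section

def IsPW (Ω : ℝ) (f : ℝ → ℂ) : Prop :=
  ∃ F : ℝ → ℂ, MemLp F 2 (volume : Measure ℝ) ∧
    (∀ ν : ℝ, ν ∉ Set.Icc (-(Ω / 2)) (Ω / 2) → F ν = 0) ∧
    ∀ x : ℝ, f x = ∫ ν : ℝ, F ν *
      Complex.exp (2 * (Real.pi : ℂ) * Complex.I * (x : ℂ) * (ν : ℂ))

lemma norm_exp2pi (x ν : ℝ) : ‖Complex.exp (2 * (Real.pi : ℂ) * Complex.I * (x : ℂ) * (ν : ℂ))‖ = 1 := by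
  have h : 2 * (Real.pi : ℂ) * Complex.I * (x : ℂ) * (ν : ℂ)
      = ((2 * Real.pi * x * ν : ℝ) : ℂ) * Complex.I := by push_cast; ring
  rw [h, Complex.norm_exp_ofReal_mul_I]

lemma integrable_of_memL2_support {F : ℝ → ℂ} {a b : ℝ} (hF : MemLp F 2 (volume : Measure ℝ))
    (hsupp : ∀ ν, ν ∉ Set.Icc a b → F ν = 0) : Integrable F volume := by
  have hs : MeasurableSet (Set.Icc a b) := measurableSet_Icc
  haveI : IsFiniteMeasure (volume.restrict (Set.Icc a b)) := by
    constructor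
    rw [Measure.restrict_apply_univ]
    exact (isCompact_Icc (a := a) (b := b)).measure_lt_top
  have h1 : IntegrableOn F (Set.Icc a b) volume := (hF.restrict _).integrable one_le_two
  have heq : F = (Set.Icc a b).indicator F := by
    funext ν
    by_cases hν : ν ∈ Set.Icc a b
    · simp [Set.indicator_of_mem hν]
    · simp [Set.indicator_of_notMem hν, hsupp ν hν]
  rw [heq]
  exact h1.integrable_indicator hs

lemma cont_aux (ν : ℝ) : Continuous fun x : ℝ => Complex.exp (2 * (Real.pi : ℂ) * Complex.I * (x : ℂ) * (ν : ℂ)) := by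
  fun_prop

lemma cont_aux2 (x : ℝ) : Continuous fun ν : ℝ => Complex.exp (2 * (Real.pi : ℂ) * Complex.I * (x : ℂ) * (ν : ℂ)) := by
  fun_prop

lemma IsPW.continuous {Ω : ℝ} {f : ℝ → ℂ} (hf : IsPW Ω f) : Continuous f := by
  obtain ⟨F, hF2, hsupp, hrep⟩ := hf
  have hFi : Integrable F volume := integrable_of_memL2_support hF2 hsupp
  have hc : Continuous fun x : ℝ => ∫ ν : ℝ, F ν *
      Complex.exp (2 * (Real.pi : ℂ) * Complex.I * (x : ℂ) * (ν : ℂ)) := by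
    apply continuous_of_dominated (bound := fun ν => ‖F ν‖)
    · intro x
      exact hF2.1.mul (cont_aux2 x).aestronglyMeasurable
    · intro x
      filter_upwards with ν
      rw [norm_mul, norm_exp2pi, mul_one]
    · exact hFi.norm
    · filter_upwards with ν
      exact continuous_const.mul (cont_aux ν)
  have : f = fun x : ℝ => ∫ ν : ℝ, F ν *
      Complex.exp (2 * (Real.pi : ℂ) * Complex.I * (x : ℂ) * (ν : ℂ)) := funext hrep
  rw [this]; exact hc

lemma IsPW.shift {Ω : ℝ} {f : ℝ → ℂ} (hf : IsPW Ω f) (t : ℝ) : IsPW Ω (fun x => f (t + x)) := by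
  obtain ⟨F, hF2, hsupp, hrep⟩ := hf
  refine ⟨fun ν => F ν * Complex.exp (2 * (Real.pi : ℂ) * Complex.I * (t : ℂ) * (ν : ℂ)), ?_, ?_, ?_⟩
  · refine hF2.of_le (hF2.1.mul (cont_aux2 t).aestronglyMeasurable) ?_
    filter_upwards with ν
    rw [norm_mul, norm_exp2pi, mul_one]
  · intro ν hν; simp only []; rw [hsupp ν hν, zero_mul]
  · intro x
    simp only []
    rw [hrep (t + x)]
    refine integral_congr_ae (Filter.Eventually.of_forall fun ν => ?_)
    simp only []
    conv_rhs => rw [mul_assoc, ← Complex.exp_add]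
    congr 2
    push_cast; ring

lemma memLp_shift {f : ℝ → ℂ} (hf : MemLp f 2 (volume : Measure ℝ)) (t : ℝ) :
    MemLp (fun x => f (t + x)) 2 (volume : Measure ℝ) :=
  MemLp.comp_measurePreserving hf (measurePreserving_add_left volume t)

lemma samp_shift {Ω A B : ℝ} {lam : ℤ → ℝ} (hA : 0 < A)
    (hsampPW : ∀ f : ℝ → ℂ, IsPW Ω f → MemLp f 2 (volume : Measure ℝ) →
      A * (∫ x : ℝ, ‖f x‖ ^ 2) ≤ (∑' n : ℤ, ‖f (lam n)‖ ^ 2) ∧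
      (∑' n : ℤ, ‖f (lam n)‖ ^ 2) ≤ B * ∫ x : ℝ, ‖f x‖ ^ 2)
    {f : ℝ → ℂ} (hPW : IsPW Ω f) (hf : MemLp f 2 (volume : Measure ℝ)) (t : ℝ) :
    Summable (fun n : ℤ => ‖f (t + lam n)‖ ^ 2) ∧
    A * (∫ x : ℝ, ‖f x‖ ^ 2) ≤ (∑' n : ℤ, ‖f (t + lam n)‖ ^ 2) ∧
    (∑' n : ℤ, ‖f (t + lam n)‖ ^ 2) ≤ B * ∫ x : ℝ, ‖f x‖ ^ 2 := by
  have hgPW := hPW.shift t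
  have hgmem := memLp_shift hf t
  obtain ⟨h1, h2⟩ := hsampPW _ hgPW hgmem
  have hint : (∫ x : ℝ, ‖(fun y => f (t + y)) x‖ ^ 2) = ∫ x : ℝ, ‖f x‖ ^ 2 :=
    integral_add_left_eq_self (μ := (volume : Measure ℝ)) (fun x : ℝ => ‖f x‖ ^ 2) t
  rw [hint] at h1 h2
  have hsame : (∑' n : ℤ, ‖(fun y => f (t + y)) (lam n)‖ ^ 2)
      = ∑' n : ℤ, ‖f (t + lam n)‖ ^ 2 := rfl
  rw [hsame] at h1 h2
  refine ⟨?_, h1, h2⟩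
  by_contra hns
  rw [tsum_eq_zero_of_not_summable hns] at h1
  have hint0 : (∫ x : ℝ, ‖f x‖ ^ 2) = 0 := by
    have hnn : 0 ≤ ∫ x : ℝ, ‖f x‖ ^ 2 :=
      integral_nonneg fun x => by positivity
    nlinarith
  have hfi : Integrable (fun x => ‖f x‖ ^ 2) volume :=
    (memLp_two_iff_integrable_sq_norm hf.1).mp hf
  have hz : (fun x => ‖f x‖ ^ 2) =ᵐ[volume] 0 :=
    (integral_eq_zero_iff_of_nonneg (fun x => by positivity) hfi).mp hint0
  have hfz : f =ᵐ[volume] 0 := by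
    filter_upwards [hz] with x hx
    have hx' : ‖f x‖ ^ 2 = 0 := by simpa using hx
    have : ‖f x‖ = 0 := pow_eq_zero_iff two_ne_zero |>.mp hx'
    simpa using this
  have hfzero : f = 0 := (hPW.continuous.ae_eq_iff_eq volume continuous_zero).mp hfz
  apply hns
  have : (fun n : ℤ => ‖f (t + lam n)‖ ^ 2) = fun _ => (0:ℝ) := by
    funext n; rw [hfzero]; simp
  rw [this]
  exact summable_zero


lemma diag_aesm {h : ℝ → ℝ → ℂ}
    (hH : AEStronglyMeasurable (Function.uncurry h) (volume : Measure (ℝ × ℝ)))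
    (hcont : ∀ᵐ t : ℝ, Continuous (h t)) (e : ℝ) :
    AEStronglyMeasurable (fun t => h t (t + e)) (volume : Measure ℝ) := by
  set H' : ℝ × ℝ → ℂ := hH.mk _ with hH'def
  have hH'meas : StronglyMeasurable H' := hH.stronglyMeasurable_mk
  have hae : ∀ᵐ p : ℝ × ℝ, Function.uncurry h p = H' p := hH.ae_eq_mk
  have hsec : ∀ᵐ t : ℝ, ∀ᵐ x : ℝ, h t x = H' (t, x) := by
    rw [show (volume : Measure (ℝ × ℝ)) = (volume : Measure ℝ).prod volume from
      Measure.volume_eq_prod ℝ ℝ] at hae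
    exact Measure.ae_ae_of_ae_prod hae
  set AN : ℕ → ℝ → ℂ := fun n t =>
    (((n : ℝ) + 1)) • ∫ u in Set.Ioc (0:ℝ) (1/((n:ℝ)+1)), H' (t, t + e + u) with hANdef
  have hAN : ∀ n, AEStronglyMeasurable (AN n) volume := by
    intro n
    show AEStronglyMeasurable (((n:ℝ)+1) • fun t => ∫ u in Set.Ioc (0:ℝ) (1/((n:ℝ)+1)), H' (t, t + e + u)) volume
    apply AEStronglyMeasurable.const_smul
    have hG : StronglyMeasurable fun q : ℝ × ℝ => H' (q.1, q.1 + e + q.2) :=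
      hH'meas.comp_measurable (by fun_prop)
    exact hG.integral_prod_right'.aestronglyMeasurable
  have hconv : ∀ᵐ t : ℝ, Filter.Tendsto (fun n => AN n t) Filter.atTop
      (nhds (h t (t + e))) := by
    filter_upwards [hcont, hsec] with t hct hsect
    have hsect' : (fun u : ℝ => h t (t + e + u)) =ᵐ[volume] fun u => H' (t, t + e + u) := by
      have hqmp : Measure.QuasiMeasurePreserving (fun u : ℝ => (t + e) + u) volume volume :=
        (measurePreserving_add_left volume (t + e)).quasiMeasurePreserving
      exact hqmp.ae_eq_comp hsect
    set φ : ℝ → ℂ := fun u => h t (t + e + u) with hφdef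
    have hφc : Continuous φ := hct.comp (by continuity)
    have hderiv : HasDerivAt (fun s => ∫ v in (0:ℝ)..s, φ v) (φ 0) 0 :=
      (hφc.integral_hasStrictDerivAt 0 0).hasDerivAt
    have hslope := hasDerivAt_iff_tendsto_slope.mp hderiv
    have hsn : Filter.Tendsto (fun n : ℕ => 1/((n:ℝ)+1)) Filter.atTop (nhdsWithin 0 {x | x ≠ 0}) := by
      rw [tendsto_nhdsWithin_iff]
      refine ⟨tendsto_one_div_add_atTop_nhds_zero_nat, ?_⟩
      filter_upwards with n
      show (1:ℝ)/((n:ℝ)+1) ≠ 0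
      positivity
    have hcomp := hslope.comp hsn
    have hkey : ∀ n : ℕ, slope (fun s => ∫ v in (0:ℝ)..s, φ v) 0 (1/((n:ℝ)+1)) = AN n t := by
      intro n
      have hpos : (0:ℝ) < 1/((n:ℝ)+1) := by positivity
      rw [slope_def_module]
      rw [intervalIntegral.integral_same, sub_zero, sub_zero]
      rw [intervalIntegral.integral_of_le hpos.le]
      have h1 : (1/((n:ℝ)+1))⁻¹ = (n:ℝ)+1 := by
        rw [one_div, inv_inv]
      rw [h1, hANdef]
      congr 1
      exact setIntegral_congr_ae measurableSet_Ioc (hsect'.mono fun u hu _ => hu)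
    have hφ0 : φ 0 = h t (t + e) := by rw [hφdef]; simp
    rw [← hφ0]
    exact hcomp.congr hkey
  exact aestronglyMeasurable_of_tendsto_ae Filter.atTop hAN hconv
lemma memL2_iff_lint {α : Type*} [MeasurableSpace α] {μ : Measure α} {f : α → ℂ}
    (hm : AEStronglyMeasurable f μ) :
    MemLp f 2 μ ↔ ∫⁻ x, (‖f x‖₊ : ℝ≥0∞)^2 ∂μ < ∞ := by
  rw [MemLp, and_iff_right hm, eLpNorm_eq_lintegral_rpow_enorm_toReal two_ne_zero ENNReal.ofNat_ne_top]
  simp only [enorm_eq_nnnorm]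
  have h2 : ((2:ℝ≥0∞)).toReal = 2 := by simp
  rw [h2]
  have hpt : ∀ x : α, (‖f x‖₊ : ℝ≥0∞) ^ (2:ℝ) = (‖f x‖₊ : ℝ≥0∞)^(2:ℕ) := fun x => by
    rw [← ENNReal.rpow_natCast]; norm_num
  simp_rw [hpt]
  rw [ENNReal.rpow_lt_top_iff_of_pos (by norm_num)]

lemma integral_normsq_eq {α : Type*} [MeasurableSpace α] {μ : Measure α} {f : α → ℂ}
    (hm : AEStronglyMeasurable f μ) :
    ∫ x, ‖f x‖^2 ∂μ = (∫⁻ x, (‖f x‖₊ : ℝ≥0∞)^2 ∂μ).toReal := by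
  rw [integral_eq_lintegral_of_nonneg_ae (Filter.Eventually.of_forall fun x => by positivity)
    ((hm.norm.aemeasurable.pow_const 2).aestronglyMeasurable)]
  congr 1
  apply lintegral_congr fun x => ?_
  rw [ENNReal.ofReal_pow (norm_nonneg _), ofReal_norm, enorm_eq_nnnorm]

lemma lam_mono {T : ℝ} (hT : 0 < T) {lam : ℤ → ℝ} (hsep : ∀ k : ℤ, T ≤ lam (k + 1) - lam k) :
    ∀ j k : ℤ, j < k → lam j + T ≤ lam k := by
  intro j k hjk
  have key : ∀ n : ℕ, lam j + T ≤ lam (j + 1 + n) := by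
    intro n
    induction n with
    | zero => have := hsep j; simpa using by linarith
    | succ m ih =>
        have := hsep (j + 1 + m)
        have he : j + 1 + (m + 1 : ℕ) = (j + 1 + m) + 1 := by push_cast; ring
        rw [he]
        linarith
  have hk : k = j + 1 + ((k - j - 1).toNat : ℤ) := by omega
  rw [hk]
  exact key _

section Main

variable {T Ω A B : ℝ} {lam : ℤ → ℝ}

theorem irregular_operator_sampling_sufficient (T Ω : ℝ) (hT : 0 < T) (hΩ : 0 < Ω)
    (lam : ℤ → ℝ) (hsep : ∀ k : ℤ, T ≤ lam (k + 1) - lam k)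
    (A B : ℝ) (hA : 0 < A) (hB : 0 < B)
    (hsampPW : ∀ f : ℝ → ℂ, IsPW Ω f → MemLp f 2 (volume : Measure ℝ) →
      A * (∫ x : ℝ, ‖f x‖ ^ 2) ≤ (∑' n : ℤ, ‖f (lam n)‖ ^ 2) ∧
      (∑' n : ℤ, ‖f (lam n)‖ ^ 2) ≤ B * ∫ x : ℝ, ‖f x‖ ^ 2) :
    ∃ c C : ℝ, 0 < c ∧ 0 < C ∧ ∀ h : ℝ → ℝ → ℂ,
      MemLp (Function.uncurry h) 2 (volume : Measure (ℝ × ℝ)) →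
      (∀ t x : ℝ, t ∉ Set.Icc 0 T → h t x = 0) →
      (∀ᵐ t : ℝ, IsPW Ω (h t)) →
      c * (∫ p : ℝ × ℝ, ‖Function.uncurry h p‖ ^ 2) ≤
          (∫ x : ℝ, ‖∑' k : ℤ, h (x - lam k) x‖ ^ 2) ∧
      (∫ x : ℝ, ‖∑' k : ℤ, h (x - lam k) x‖ ^ 2) ≤
          C * ∫ p : ℝ × ℝ, ‖Function.uncurry h p‖ ^ 2 := by
  refine ⟨A, B, hA, hB, fun h hMem hsupp hPW => ?_⟩
  classical
  set ennw : ℤ → ℝ → ℝ≥0∞ := fun k x => (‖h (x - lam k) x‖₊ : ℝ≥0∞)^2 with hennwdef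
  set w : ℤ → ℝ → ℝ≥0∞ := fun k t => (‖h t (t + lam k)‖₊ : ℝ≥0∞)^2 with hwdef
  have hcont : ∀ᵐ t : ℝ, Continuous (h t) := hPW.mono fun t ht => IsPW.continuous ht
  have hbase : ∀ k : ℤ, AEStronglyMeasurable (fun t => h t (t + lam k)) volume :=
    fun k => diag_aesm hMem.1 hcont (lam k)
  have hterm : ∀ k : ℤ, AEStronglyMeasurable (fun x => h (x - lam k) x) volume := by
    intro k
    have hmp : MeasurePreserving (fun x : ℝ => x - lam k) volume volume :=
      measurePreserving_sub_right volume (lam k)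
    have hcomp := (hbase k).comp_quasiMeasurePreserving hmp.quasiMeasurePreserving
    refine hcomp.congr (Filter.Eventually.of_forall fun x => ?_)
    simp only [Function.comp]
    rw [sub_add_cancel]
  have hwmeas : ∀ k : ℤ, AEMeasurable (w k) volume :=
    fun k => ((hbase k).enorm).pow_const 2
  have hennw : ∀ k : ℤ, AEMeasurable (ennw k) volume :=
    fun k => ((hterm k).enorm).pow_const 2
  -- good points
  have hgood : ∀ᵐ x : ℝ, x ∉ Set.range lam ∧ x ∉ Set.range (fun k : ℤ => lam k + T) := by
    have h1 : volume (Set.range lam) = 0 :=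
      Set.Countable.measure_zero (Set.countable_range lam) _
    have h2 : volume (Set.range (fun k : ℤ => lam k + T)) = 0 :=
      Set.Countable.measure_zero (Set.countable_range _) _
    exact (measure_eq_zero_iff_ae_notMem.mp h1).and (measure_eq_zero_iff_ae_notMem.mp h2)
  have huniq : ∀ x : ℝ, x ∉ Set.range lam → x ∉ Set.range (fun k : ℤ => lam k + T) →
      ∀ j k : ℤ, x - lam j ∈ Set.Icc 0 T → x - lam k ∈ Set.Icc 0 T → j = k := by
    intro x hx1 hx2 j k hj hk
    by_contra hne
    obtain ⟨hj0, hjT⟩ := Set.mem_Icc.mp hj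
    obtain ⟨hk0, hkT⟩ := Set.mem_Icc.mp hk
    rcases lt_or_gt_of_ne hne with hlt | hlt
    · have := lam_mono hT hsep j k hlt
      exact hx1 ⟨k, by linarith⟩
    · have := lam_mono hT hsep k j hlt
      exact hx1 ⟨j, by linarith⟩
  -- pointwise identity
  have hpt : ∀ᵐ x : ℝ, ((‖∑' k : ℤ, h (x - lam k) x‖₊ : ℝ≥0∞)^2 = ∑' k : ℤ, ennw k x) ∧
      (‖∑' k : ℤ, h (x - lam k) x‖^2 = (∑' k : ℤ, ennw k x).toReal) := by
    filter_upwards [hgood] with x hgx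
    obtain ⟨hx1, hx2⟩ := hgx
    by_cases hex : ∃ k₀ : ℤ, x - lam k₀ ∈ Set.Icc 0 T
    · obtain ⟨k₀, hk₀⟩ := hex
      have hz : ∀ k : ℤ, k ≠ k₀ → h (x - lam k) x = 0 := by
        intro k hk
        exact hsupp _ x fun hmem => hk (huniq x hx1 hx2 k k₀ hmem hk₀)
      have ht1 : (∑' k : ℤ, h (x - lam k) x) = h (x - lam k₀) x := tsum_eq_single k₀ hz
      have ht2 : (∑' k : ℤ, ennw k x) = ennw k₀ x :=
        tsum_eq_single k₀ (fun k hk => by simp [hennwdef, hz k hk])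
      constructor
      · rw [ht1, ht2]
      · rw [ht1, ht2, hennwdef]
        rw [ENNReal.toReal_pow]
        simp
    · push_neg at hex
      have hz : ∀ k : ℤ, h (x - lam k) x = 0 := fun k => hsupp _ x (hex k)
      have ht1 : (∑' k : ℤ, h (x - lam k) x) = 0 := by simp [hz]
      have ht2 : (∑' k : ℤ, ennw k x) = 0 := by simp [hennwdef, hz]
      rw [ht1, ht2]; simp
  -- lintegral identities
  have hshift : ∀ k : ℤ, (∫⁻ x : ℝ, ennw k x) = ∫⁻ t : ℝ, w k t := by
    intro k
    have hpw : ∀ x : ℝ, ennw k x = w k (x - lam k) := by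
      intro x; simp only [hennwdef, hwdef, sub_add_cancel]
    simp_rw [hpw]
    exact lintegral_sub_right_eq_self (w k) (lam k)
  have hI : (∫⁻ x : ℝ, ∑' k : ℤ, ennw k x) = ∫⁻ t : ℝ, ∑' k : ℤ, w k t := by
    rw [lintegral_tsum hennw, lintegral_tsum hwmeas]
    exact tsum_congr hshift
  -- product structure
  have hH'm : StronglyMeasurable (hMem.1.mk _) := hMem.1.stronglyMeasurable_mk
  set H' : ℝ × ℝ → ℂ := hMem.1.mk _ with hH'def
  have haeH : ∀ᵐ p : ℝ × ℝ, Function.uncurry h p = H' p := hMem.1.ae_eq_mk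
  set N : ℝ≥0∞ := ∫⁻ p : ℝ × ℝ, (‖Function.uncurry h p‖₊ : ℝ≥0∞)^2 with hNdef
  have hNfin : N < ⊤ := (memL2_iff_lint hMem.1).mp hMem
  have hNeq : N = ∫⁻ p : ℝ × ℝ, (‖H' p‖₊ : ℝ≥0∞)^2 :=
    lintegral_congr_ae (haeH.mono fun p hp => by simp only [hp])
  have hprod : N = ∫⁻ t : ℝ, ∫⁻ x : ℝ, (‖H' (t, x)‖₊ : ℝ≥0∞)^2 := by
    rw [hNeq, Measure.volume_eq_prod]
    exact lintegral_prod _ (hH'm.measurable.enorm.pow_const 2).aemeasurable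
  have hsecfin : ∀ᵐ t : ℝ, (∫⁻ x : ℝ, (‖H' (t, x)‖₊ : ℝ≥0∞)^2) < ⊤ := by
    apply ae_lt_top (Measurable.lintegral_prod_right' (hH'm.measurable.enorm.pow_const 2))
    simp only [enorm_eq_nnnorm]; rw [← hprod]; exact hNfin.ne
  have hseceq : ∀ᵐ t : ℝ, ∀ᵐ x : ℝ, h t x = H' (t, x) := by
    rw [Measure.volume_eq_prod] at haeH
    exact Measure.ae_ae_of_ae_prod haeH
  have hK : ∀ᵐ t : ℝ, (∫⁻ x : ℝ, (‖h t x‖₊ : ℝ≥0∞)^2) < ⊤ := by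
    filter_upwards [hsecfin, hseceq] with t h1 h2
    have heq : (∫⁻ x : ℝ, (‖h t x‖₊ : ℝ≥0∞)^2) = ∫⁻ x : ℝ, (‖H' (t, x)‖₊ : ℝ≥0∞)^2 :=
      lintegral_congr_ae (h2.mono fun x hx => by simp only [hx])
    rw [heq]; exact h1
  -- per-t sampling bounds
  have hbound : ∀ᵐ t : ℝ,
      ENNReal.ofReal A * (∫⁻ x : ℝ, (‖h t x‖₊ : ℝ≥0∞)^2) ≤ (∑' k : ℤ, w k t) ∧
      (∑' k : ℤ, w k t) ≤ ENNReal.ofReal B * (∫⁻ x : ℝ, (‖h t x‖₊ : ℝ≥0∞)^2) := by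
    filter_upwards [hPW, hK, hcont] with t hPWt hKt hct
    have hmem_t : MemLp (h t) 2 volume := (memL2_iff_lint hct.aestronglyMeasurable).mpr hKt
    obtain ⟨hsum, hlow, hup⟩ := samp_shift hA hsampPW hPWt hmem_t t
    have hJ : (∑' k : ℤ, w k t) = ENNReal.ofReal (∑' n : ℤ, ‖h t (t + lam n)‖^2) := by
      rw [ENNReal.ofReal_tsum_of_nonneg (fun n => by positivity) hsum]
      refine tsum_congr fun n => ?_
      rw [ENNReal.ofReal_pow (norm_nonneg _), ofReal_norm, enorm_eq_nnnorm]
    have hKr : (∫ x : ℝ, ‖h t x‖^2) = (∫⁻ x : ℝ, (‖h t x‖₊ : ℝ≥0∞)^2).toReal :=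
      integral_normsq_eq hct.aestronglyMeasurable
    constructor
    · have e1 : ENNReal.ofReal A * (∫⁻ x : ℝ, (‖h t x‖₊ : ℝ≥0∞)^2)
          = ENNReal.ofReal (A * (∫⁻ x : ℝ, (‖h t x‖₊ : ℝ≥0∞)^2).toReal) := by
        rw [ENNReal.ofReal_mul hA.le, ENNReal.ofReal_toReal hKt.ne]
      rw [e1, hJ]
      exact ENNReal.ofReal_le_ofReal (by rw [← hKr]; exact hlow)
    · have e1 : ENNReal.ofReal B * (∫⁻ x : ℝ, (‖h t x‖₊ : ℝ≥0∞)^2)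
          = ENNReal.ofReal (B * (∫⁻ x : ℝ, (‖h t x‖₊ : ℝ≥0∞)^2).toReal) := by
        rw [ENNReal.ofReal_mul hB.le, ENNReal.ofReal_toReal hKt.ne]
      rw [e1, hJ]
      exact ENNReal.ofReal_le_ofReal (by rw [← hKr]; exact hup)
  have hKint : (∫⁻ t : ℝ, ∫⁻ x : ℝ, (‖h t x‖₊ : ℝ≥0∞)^2) = N := by
    rw [hprod]
    apply lintegral_congr_ae
    filter_upwards [hseceq] with t h2
    exact lintegral_congr_ae (h2.mono fun x hx => by simp only [hx])
  have hlowI : ENNReal.ofReal A * N ≤ ∫⁻ t : ℝ, ∑' k : ℤ, w k t := by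
    rw [← hKint, ← lintegral_const_mul' _ _ ENNReal.ofReal_ne_top]
    exact lintegral_mono_ae (hbound.mono fun t ht => ht.1)
  have hupI : (∫⁻ t : ℝ, ∑' k : ℤ, w k t) ≤ ENNReal.ofReal B * N := by
    rw [← hKint, ← lintegral_const_mul' _ _ ENNReal.ofReal_ne_top]
    exact lintegral_mono_ae (hbound.mono fun t ht => ht.2)
  have hBNfin : ENNReal.ofReal B * N ≠ ⊤ := by
    exact (ENNReal.mul_lt_top ENNReal.ofReal_lt_top hNfin).ne
  have hIfin : (∫⁻ t : ℝ, ∑' k : ℤ, w k t) ≠ ⊤ := by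
    exact (lt_of_le_of_lt hupI (lt_of_le_of_ne le_top hBNfin)).ne
  -- Bochner conversions
  have hgint : (∫ x : ℝ, ‖∑' k : ℤ, h (x - lam k) x‖^2)
      = (∫⁻ x : ℝ, ∑' k : ℤ, ennw k x).toReal := by
    have hm2 : AEMeasurable (fun x : ℝ => ∑' k : ℤ, ennw k x) volume :=
      AEMeasurable.ennreal_tsum hennw
    have hmeasg : AEStronglyMeasurable (fun x : ℝ => ‖∑' k : ℤ, h (x - lam k) x‖^2) volume := by
      refine (hm2.ennreal_toReal.aestronglyMeasurable).congr ?_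
      filter_upwards [hpt] with x hx
      exact hx.2.symm
    rw [integral_eq_lintegral_of_nonneg_ae (Filter.Eventually.of_forall fun x => by positivity)
      hmeasg]
    congr 1
    apply lintegral_congr_ae
    filter_upwards [hpt] with x hx
    rw [ENNReal.ofReal_pow (norm_nonneg _), ofReal_norm, enorm_eq_nnnorm, hx.1]
  have hhint : (∫ p : ℝ × ℝ, ‖Function.uncurry h p‖^2) = N.toReal :=
    integral_normsq_eq hMem.1
  constructor
  · rw [hhint, hgint, hI]
    have hmono := ENNReal.toReal_mono hIfin hlowI
    rwa [ENNReal.toReal_mul, ENNReal.toReal_ofReal hA.le] at hmono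
  · rw [hhint, hgint, hI]
    have hmono := ENNReal.toReal_mono hBNfin hupI
    rwa [ENNReal.toReal_mul, ENNReal.toReal_ofReal hB.le] at hmono

end Main
end
end

section
/- Let T > 0 and let V be a reproducing kernel Hilbert subspace of L²(ℝ) with reproducing kernel k(s,t), such that for every t ∈ [0,T] the family {k(·, t+nT)}_{n∈ℤ} is a frame for V with frame bounds uniform in t. Let h ∈ L²(ℝ²) with supp h(·,x) ⊆ [0,T] and h(t,·) ∈ V for a.e. t ∈ [0,T]. Then ‖h‖²_{L²(ℝ²)} ≍ ∫_ℝ |g(x)|² dx, where g(x) = Σ_{k∈ℤ} h(x − kT, x). -/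
open MeasureTheory Complex Real Filter Topology
open scoped ENNReal NNReal

noncomputable section

-- countability of orthonormal sets in a second-countable space
lemma countable_of_orthonormal {F : Type*} [NormedAddCommGroup F] [InnerProductSpace ℂ F]
    [SecondCountableTopology F] {w : Set F} (hw : Orthonormal ℂ ((↑) : w → F)) :
    Countable w := by
  have hdist : ∀ i j : w, i ≠ j → (1 : ℝ) ≤ dist (i : F) (j : F) := by
    intro i j hij
    have h2 : dist (i : F) (j : F) ^ 2 = 2 := by
      rw [dist_eq_norm, @norm_sub_sq ℂ]
      rw [hw.2 hij]
      simp [hw.1 i, hw.1 j]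
      norm_num
    nlinarith [dist_nonneg (x := (i : F)) (y := (j : F))]
  apply Pairwise.countable_of_isOpen_disjoint (s := fun i : w => Metric.ball (i : F) (1/2))
  · intro i j hij
    apply Metric.ball_disjoint_ball
    rw [← add_div]
    norm_num
    exact hdist i j hij
  · exact fun i => Metric.isOpen_ball
  · exact fun i => Metric.nonempty_ball.2 (by norm_num)

lemma integrable_sq_norm {α : Type*} {m : MeasurableSpace α} {μ : Measure α} {E : Type*}
    [NormedAddCommGroup E] {f : α → E} (hf : MemLp f 2 μ) :
    Integrable (fun x => ‖f x‖ ^ 2) μ := by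
  have h := hf.integrable_norm_rpow two_ne_zero ENNReal.ofNat_ne_top
  have : (fun x => ‖f x‖ ^ ((2 : ℝ≥0∞).toReal)) = fun x => ‖f x‖ ^ 2 := by
    funext x
    rw [ENNReal.toReal_ofNat, show ((2:ℝ)) = ((2:ℕ):ℝ) by norm_num, Real.rpow_natCast]
  rwa [this] at h

lemma ofReal_integral_norm_sq {α : Type*} {m : MeasurableSpace α} {μ : Measure α} {E : Type*}
    [NormedAddCommGroup E] {f : α → E} (hf : MemLp f 2 μ) :
    ENNReal.ofReal (∫ x, ‖f x‖ ^ 2 ∂μ) = ∫⁻ x, (‖f x‖₊ : ℝ≥0∞) ^ 2 ∂μ := by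
  rw [ofReal_integral_eq_lintegral_ofReal (integrable_sq_norm hf)
    (Eventually.of_forall fun x => sq_nonneg _)]
  exact lintegral_congr fun x => by
    rw [ENNReal.ofReal_pow (norm_nonneg _), ofReal_norm, enorm_eq_nnnorm]

set_option maxHeartbeats 2000000 in
set_option synthInstance.maxHeartbeats 400000 in
lemma diag_aesm_s18 (T : ℝ) (V : Set (ℝ → ℂ)) (k : ℝ → ℝ → ℂ)
    (hVL2 : ∀ f ∈ V, MemLp f 2 (volume : Measure ℝ))
    (hkV : ∀ t : ℝ, (fun s => k s t) ∈ V)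
    (hrepro : ∀ f ∈ V, ∀ t : ℝ, f t = ∫ s : ℝ, f s * (starRingEnd ℂ) (k s t))
    (h : ℝ → ℝ → ℂ)
    (hh : MemLp (Function.uncurry h) 2 (volume : Measure (ℝ × ℝ)))
    (hV : ∀ᵐ t ∂(volume.restrict (Set.Ioo (0:ℝ) T)), h t ∈ V) (c : ℝ) :
    AEStronglyMeasurable (fun t => h t (t + c)) (volume.restrict (Set.Ioo (0:ℝ) T)) := by
  classical
  haveI : Fact ((2:ℝ≥0∞) ≠ ∞) := ⟨ENNReal.ofNat_ne_top⟩
  set μT := volume.restrict (Set.Ioo (0:ℝ) T) with hμT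
  set E := Lp ℂ 2 (volume : Measure ℝ) with hE
  -- kernel functions as elements of L²
  set κ : ℝ → E := fun x => MemLp.toLp (fun s => k s x) (hVL2 _ (hkV x)) with hκ
  have hκcoe : ∀ x, (κ x : ℝ → ℂ) =ᵐ[volume] fun s => k s x := fun x => MemLp.coeFn_toLp _
  -- reproducing property as an inner product identity
  have hinner : ∀ (f : ℝ → ℂ) (hf : f ∈ V) (x : ℝ),
      (inner ℂ (κ x) (MemLp.toLp f (hVL2 f hf)) : ℂ) = f x := by
    intro f hf x
    rw [hrepro f hf x, MeasureTheory.L2.inner_def]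
    apply integral_congr_ae
    filter_upwards [hκcoe x, MemLp.coeFn_toLp (hVL2 f hf)] with s h1 h2
    rw [RCLike.inner_apply, h1, h2, mul_comm]
  -- measurability of pairings with a single kernel element
  have hB : ∀ u : ℝ, AEStronglyMeasurable (fun x => (inner ℂ (κ u) (κ x) : ℂ)) volume := by
    intro u
    have h1 : AEStronglyMeasurable (fun x => k x u) volume :=
      (hVL2 _ (hkV u)).aestronglyMeasurable
    have h2 : AEStronglyMeasurable (fun x => (starRingEnd ℂ) (k x u)) volume :=
      RCLike.continuous_conj.comp_aestronglyMeasurable h1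
    apply h2.congr
    apply Eventually.of_forall
    intro x
    have h3 : (inner ℂ (κ x) (κ u) : ℂ) = k x u := hinner _ (hkV u) x
    show (starRingEnd ℂ) (k x u) = (inner ℂ (κ u) (κ x) : ℂ)
    rw [← h3, inner_conj_symm]
  -- measurability of pairings with elements of the span
  have hspan : ∀ y ∈ Submodule.span ℂ (Set.range κ),
      AEStronglyMeasurable (fun x => (inner ℂ y (κ x) : ℂ)) volume := by
    intro y hy
    induction hy using Submodule.span_induction with
    | mem y hy =>
      obtain ⟨u, rfl⟩ := hy
      exact hB u
    | zero => exact (aestronglyMeasurable_const (b := (0:ℂ))).congr (Eventually.of_forall fun x => (inner_zero_left (κ x)).symm)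
    | add y z hy hz ihy ihz => exact (ihy.add ihz).congr (Eventually.of_forall fun x => (inner_add_left y z (κ x)).symm)
    | smul a y hy ihy =>
      simp only [inner_smul_left]
      exact (aestronglyMeasurable_const (b := (starRingEnd ℂ) a)).mul ihy
  -- measurability of pairings with elements of the closure of the span
  have hclos : ∀ y, y ∈ closure ((Submodule.span ℂ (Set.range κ) : Submodule ℂ E) : Set E) →
      AEStronglyMeasurable (fun x => (inner ℂ y (κ x) : ℂ)) volume := by
    intro y hy
    obtain ⟨u, hu, hlim⟩ := mem_closure_iff_seq_limit.1 hy
    exact aestronglyMeasurable_of_tendsto_ae atTop (fun n => hspan _ (hu n))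
      (Eventually.of_forall fun x => hlim.inner tendsto_const_nhds)
  -- the closed span
  set K : Submodule ℂ E := (Submodule.span ℂ (Set.range κ)).topologicalClosure with hK
  haveI : CompleteSpace K := (Submodule.isClosed_topologicalClosure _).completeSpace_coe
  haveI : SecondCountableTopology E := by infer_instance
  obtain ⟨w, b, hbcoe⟩ := exists_hilbertBasis ℂ K
  haveI : Countable w := countable_of_orthonormal (hbcoe ▸ b.orthonormal)
  have hKmem : ∀ x : ℝ, κ x ∈ K :=
    fun x => Submodule.le_topologicalClosure _ (Submodule.subset_span ⟨x, rfl⟩)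
  have hbmem : ∀ i : w, ((b i : K) : E) ∈ closure ((Submodule.span ℂ (Set.range κ) : Submodule ℂ E) : Set E) := by
    intro i
    rw [← Submodule.topologicalClosure_coe]
    exact SetLike.mem_coe.2 (b i : K).2
  -- measurable versions of the coefficient functions
  set a : w → ℝ → ℂ := fun i => (hclos _ (hbmem i)).mk _ with ha
  have ha_meas : ∀ i, StronglyMeasurable (a i) := fun i => (hclos _ (hbmem i)).stronglyMeasurable_mk
  have ha_eq : ∀ i : w, (fun x => (inner ℂ ((b i : K) : E) (κ x) : ℂ)) =ᵐ[volume] a i :=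
    fun i => (hclos _ (hbmem i)).ae_eq_mk
  -- measurable versions
  set H : ℝ × ℝ → ℂ := hh.1.mk _ with hH
  have hH_meas : StronglyMeasurable H := hh.1.stronglyMeasurable_mk
  set e : w → ℝ → ℂ := fun i => (Lp.aestronglyMeasurable ((b i : K) : E)).mk _ with he
  have he_meas : ∀ i, StronglyMeasurable (e i) :=
    fun i => (Lp.aestronglyMeasurable _).stronglyMeasurable_mk
  have he_eq : ∀ i : w, ((((b i : K) : E)) : ℝ → ℂ) =ᵐ[volume] e i :=
    fun i => (Lp.aestronglyMeasurable _).ae_eq_mk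
  set Bf : w → ℝ → ℂ := fun i t => ∫ s, (starRingEnd ℂ) (e i s) * H (t, s) with hBf
  have hBf_meas : ∀ i, StronglyMeasurable (Bf i) := by
    intro i
    apply StronglyMeasurable.integral_prod_right' (f := fun p : ℝ × ℝ => (starRingEnd ℂ) (e i p.2) * H p)
    exact (RCLike.continuous_conj.comp_stronglyMeasurable
      ((he_meas i).comp_measurable measurable_snd)).mul hH_meas
  set τ : w → ℝ → ℂ := fun i t => (starRingEnd ℂ) (a i (t + c)) * Bf i t with hτ
  have hτ_meas : ∀ i, AEStronglyMeasurable (τ i) μT := by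
    intro i
    exact ((RCLike.continuous_conj.comp_stronglyMeasurable
      ((ha_meas i).comp_measurable (measurable_add_const c))).mul (hBf_meas i)).aestronglyMeasurable
  -- a.e. facts
  have hslice : ∀ᵐ t ∂μT, (fun s => h t s) =ᵐ[volume] fun s => H (t, s) := by
    have h0 := hh.1.ae_eq_mk
    have h1 := Measure.ae_ae_of_ae_prod (μ := (volume : Measure ℝ)) (ν := (volume : Measure ℝ)) h0
    apply ae_restrict_of_ae
    exact h1.mono fun t ht => ht
  have hshift : ∀ᵐ t ∂μT, ∀ i : w, (inner ℂ ((b i : K) : E) (κ (t + c)) : ℂ) = a i (t + c) := by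
    rw [ae_all_iff]
    intro i
    apply ae_restrict_of_ae
    have hq : Measure.QuasiMeasurePreserving (fun t : ℝ => t + c) volume volume :=
      (measurePreserving_add_right volume c).quasiMeasurePreserving
    have := hq.ae_eq_comp (ha_eq i)
    exact this.mono fun t ht => ht
  have key : ∀ᵐ t ∂μT, HasSum (fun i : w => τ i t) (h t (t + c)) := by
    filter_upwards [hslice, hshift, hV] with t ht_slice ht_shift ht_V
    set f2 : E := MemLp.toLp (h t) (hVL2 _ ht_V) with hf2
    have hval : (inner ℂ (κ (t + c)) f2 : ℂ) = h t (t + c) := hinner _ ht_V (t + c)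
    have hproj : ∀ v : E, v ∈ K →
        (inner ℂ v f2 : ℂ) = inner ℂ v ((K.orthogonalProjection f2 : K) : E) := by
      intro v hv
      have h0 : (inner ℂ (f2 - ((K.orthogonalProjection f2 : K) : E)) v : ℂ) = 0 :=
          K.starProjection_inner_eq_zero f2 v hv
      have h1 : (inner ℂ v (f2 - ((K.orthogonalProjection f2 : K) : E)) : ℂ) = 0 := by
        rw [← inner_conj_symm, h0, map_zero]
      rw [inner_sub_right] at h1
      linear_combination h1
    set x' : K := ⟨κ (t + c), hKmem (t + c)⟩ with hx'
    set y' : K := K.orthogonalProjection f2 with hy'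
    have hsum := b.hasSum_inner_mul_inner x' y'
    have hval2 : (inner ℂ x' y' : ℂ) = h t (t + c) := by
      rw [Submodule.coe_inner, ← hproj _ (hKmem (t + c)), hval]
    have hterm : ∀ i : w, (inner ℂ x' (b i) * inner ℂ (b i) y' : ℂ) = τ i t := by
      intro i
      have e1 : (inner ℂ x' (b i) : ℂ) = (starRingEnd ℂ) (a i (t + c)) := by
        rw [Submodule.coe_inner, ← inner_conj_symm]
        congr 1
        exact ht_shift i
      have e2 : (inner ℂ (b i) y' : ℂ) = Bf i t := by
        rw [Submodule.coe_inner, ← hproj _ (b i : K).2]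
        rw [MeasureTheory.L2.inner_def]
        apply integral_congr_ae
        filter_upwards [he_eq i, MemLp.coeFn_toLp (hVL2 _ ht_V), ht_slice] with s h1 h2 h3
        rw [RCLike.inner_apply, h1, h2, h3, mul_comm]
      rw [e1, e2]
    rw [hval2] at hsum
    rw [show (fun i : w => τ i t) = fun i : w => (inner ℂ x' (b i) * inner ℂ (b i) y' : ℂ) from
      funext fun i => (hterm i).symm]
    exact hsum
  exact aestronglyMeasurable_of_tendsto_ae atTop
    (fun F : Finset w => Finset.aestronglyMeasurable_sum F fun i _ => hτ_meas i)
    (key.mono fun t ht => by unfold HasSum at ht; simpa [Finset.sum_apply] using ht)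

set_option maxHeartbeats 1000000 in
theorem rkhs_operator_sampling (T : ℝ) (hT : 0 < T)
    (V : Set (ℝ → ℂ)) (k : ℝ → ℝ → ℂ)
    (hVL2 : ∀ f ∈ V, MemLp f 2 (volume : Measure ℝ))
    (hkV : ∀ t : ℝ, (fun s => k s t) ∈ V)
    -- reproducing property
    (hrepro : ∀ f ∈ V, ∀ t : ℝ, f t = ∫ s : ℝ, f s * (starRingEnd ℂ) (k s t))
    (A B : ℝ) (hA : 0 < A) (hB : 0 < B)
    -- `{k(·, t+nT)}ₙ` is a frame for `V`, with bounds uniform in `t ∈ [0,T]`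
    (hframe : ∀ t ∈ Set.Icc (0 : ℝ) T, ∀ f ∈ V,
      A * (∫ s : ℝ, ‖f s‖ ^ 2) ≤
        (∑' n : ℤ, ‖∫ s : ℝ, f s * (starRingEnd ℂ) (k s (t + n * T))‖ ^ 2) ∧
      (∑' n : ℤ, ‖∫ s : ℝ, f s * (starRingEnd ℂ) (k s (t + n * T))‖ ^ 2) ≤
        B * ∫ s : ℝ, ‖f s‖ ^ 2) :
    ∃ c C : ℝ, 0 < c ∧ 0 < C ∧ ∀ h : ℝ → ℝ → ℂ,
      MemLp (Function.uncurry h) 2 (volume : Measure (ℝ × ℝ)) →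
      (∀ t x : ℝ, t ∉ Set.Icc 0 T → h t x = 0) →
      (∀ᵐ t ∂(volume.restrict (Set.Icc (0 : ℝ) T)), h t ∈ V) →
      c * (∫ p : ℝ × ℝ, ‖Function.uncurry h p‖ ^ 2) ≤
        (∫ x : ℝ, ‖∑' n : ℤ, h (x - n * T) x‖ ^ 2) ∧
      (∫ x : ℝ, ‖∑' n : ℤ, h (x - n * T) x‖ ^ 2) ≤
        C * ∫ p : ℝ × ℝ, ‖Function.uncurry h p‖ ^ 2 := by
  classical
  refine ⟨A, B, hA, hB, ?_⟩
  intro h hh hsupp hV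
  set g : ℝ → ℂ := fun x => ∑' n : ℤ, h (x - (n : ℝ) * T) x with hg
  set μT := volume.restrict (Set.Ioo (0:ℝ) T) with hμT
  have hVIoo : ∀ᵐ t ∂μT, h t ∈ V :=
    ae_restrict_of_ae_restrict_of_subset Set.Ioo_subset_Icc_self hV
  have hdiag : ∀ c : ℝ, AEStronglyMeasurable (fun t => h t (t + c)) μT :=
    diag_aesm_s18 T V k hVL2 hkV hrepro h hh hVIoo
  -- values of g on the open intervals
  have hgval : ∀ (n : ℤ) (x : ℝ), x ∈ Set.Ioo ((n:ℝ)*T) ((n:ℝ)*T + T) →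
      g x = h (x - (n:ℝ)*T) x := by
    intro n x hx
    apply tsum_eq_single
    intro m hmn
    apply hsupp
    intro hmem
    rcases hmn.lt_or_gt with hlt | hlt
    · have h1 : (m:ℝ) + 1 ≤ (n:ℝ) := by exact_mod_cast Int.add_one_le_iff.mpr hlt
      have := hmem.2
      have := hx.1
      nlinarith
    · have h1 : (n:ℝ) + 1 ≤ (m:ℝ) := by exact_mod_cast Int.add_one_le_iff.mpr hlt
      have := hmem.1
      have := hx.2
      nlinarith
  -- the intervals are pairwise disjoint and cover ℝ a.e.
  have hdisj : Pairwise (Function.onFun Disjoint fun n : ℤ => Set.Ioo ((n:ℝ)*T) ((n:ℝ)*T + T)) := by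
    intro m n hmn
    simp only [Function.onFun]
    apply Set.disjoint_left.mpr
    intro x hx1 hx2
    apply hmn
    have h1 : (m:ℝ) < (n:ℝ) + 1 := by nlinarith [hx1.1, hx1.2, hx2.1, hx2.2]
    have h2 : (n:ℝ) < (m:ℝ) + 1 := by nlinarith [hx1.1, hx1.2, hx2.1, hx2.2]
    have h1' : m < n + 1 := by exact_mod_cast h1
    have h2' : n < m + 1 := by exact_mod_cast h2
    omega
  have hcover : (⋃ n : ℤ, Set.Ioo ((n:ℝ)*T) ((n:ℝ)*T + T)) =ᵐ[volume] Set.univ := by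
    rw [MeasureTheory.ae_eq_univ]
    refine measure_mono_null ?_ ((Set.countable_range (fun n : ℤ => (n:ℝ)*T)).measure_zero volume)
    intro x hx
    simp only [Set.mem_compl_iff, Set.mem_iUnion, Set.mem_Ioo, not_exists, not_and] at hx
    set n := ⌊x / T⌋ with hn
    have h1 : (n:ℝ) * T ≤ x := by
      have h0 := Int.floor_le (x / T)
      have := mul_le_mul_of_nonneg_right h0 hT.le
      rwa [div_mul_cancel₀ _ hT.ne'] at this
    have h2 : x < (n:ℝ) * T + T := by
      have h0 := Int.lt_floor_add_one (x / T)
      have := mul_lt_mul_of_pos_right h0 hT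
      rw [div_mul_cancel₀ _ hT.ne'] at this
      nlinarith
    rcases eq_or_lt_of_le h1 with he | hl
    · exact ⟨n, he⟩
    · exact absurd h2 (hx n hl)
  -- piecewise a.e.-measurability of g
  have hpiece : ∀ n : ℤ, AEStronglyMeasurable (fun x => h (x - (n:ℝ)*T) x)
      (volume.restrict (Set.Ioo ((n:ℝ)*T) ((n:ℝ)*T + T))) := by
    intro n
    have hpre : (fun x : ℝ => x + (n:ℝ)*T) ⁻¹' (Set.Ioo ((n:ℝ)*T) ((n:ℝ)*T + T)) =
        Set.Ioo 0 T := by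
      ext x
      simp only [Set.mem_preimage, Set.mem_Ioo]
      constructor
      · rintro ⟨h1, h2⟩; constructor <;> linarith
      · rintro ⟨h1, h2⟩; constructor <;> linarith
    have hrm : volume.restrict (Set.Ioo ((n:ℝ)*T) ((n:ℝ)*T + T)) =
        Measure.map (fun x : ℝ => x + (n:ℝ)*T) μT := by
      rw [hμT, ← hpre, ← Measure.restrict_map (measurable_add_const _) measurableSet_Ioo,
        (measurePreserving_add_right volume ((n:ℝ)*T)).map_eq]
    rw [hrm, (measurableEmbedding_addRight ((n:ℝ)*T)).aestronglyMeasurable_map_iff]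
    apply (hdiag ((n:ℝ)*T)).congr
    apply Eventually.of_forall
    intro t
    simp only [Function.comp, add_sub_cancel_right]
  have hGae : AEStronglyMeasurable g volume := by
    have h1 : AEStronglyMeasurable g
        (volume.restrict (⋃ n : ℤ, Set.Ioo ((n:ℝ)*T) ((n:ℝ)*T + T))) := by
      rw [aestronglyMeasurable_iUnion_iff]
      intro n
      apply (hpiece n).congr
      filter_upwards [ae_restrict_mem measurableSet_Ioo] with x hx
      exact (hgval n x hx).symm
    rwa [Measure.restrict_congr_set hcover, Measure.restrict_univ] at h1
  -- the slice quantities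
  set J : ℝ → ℝ≥0∞ := fun t => ∫⁻ s, (‖h t s‖₊ : ℝ≥0∞) ^ 2 with hJ
  set Dd : ℝ → ℝ≥0∞ := fun t => ∑' n : ℤ, (‖h t (t + (n:ℝ)*T)‖₊ : ℝ≥0∞) ^ 2 with hDd
  -- frame inequality, slice by slice
  have hframe' : ∀ᵐ t ∂μT, ENNReal.ofReal A * J t ≤ Dd t ∧ Dd t ≤ ENNReal.ofReal B * J t := by
    filter_upwards [hVIoo, ae_restrict_mem measurableSet_Ioo] with t htV htmem
    have htIcc : t ∈ Set.Icc (0:ℝ) T := Set.Ioo_subset_Icc_self htmem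
    have hmem2 : MemLp (h t) 2 (volume : Measure ℝ) := hVL2 _ htV
    obtain ⟨hlow, hup⟩ := hframe t htIcc (h t) htV
    simp_rw [← hrepro (h t) htV] at hlow hup
    have hnn : ∀ n : ℤ, (0:ℝ) ≤ ‖h t (t + (n:ℝ)*T)‖ ^ 2 := fun n => sq_nonneg _
    have hsumm : Summable (fun n : ℤ => ‖h t (t + (n:ℝ)*T)‖ ^ 2) := by
      by_contra hns
      rw [tsum_eq_zero_of_not_summable hns] at hlow
      have hr_nonneg : (0:ℝ) ≤ ∫ s, ‖h t s‖ ^ 2 := integral_nonneg fun s => sq_nonneg _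
      have hr0 : ∫ s, ‖h t s‖ ^ 2 = 0 := by nlinarith
      have hae0 : (fun s => h t s) =ᵐ[volume] 0 := by
        have hi := integrable_sq_norm hmem2
        have h2 := (integral_eq_zero_iff_of_nonneg (fun s => sq_nonneg _) hi).mp hr0
        filter_upwards [h2] with s hs
        have hs' : ‖h t s‖ ^ 2 = 0 := hs
        have : ‖h t s‖ = 0 := by
          have := sq_eq_zero_iff.mp hs'
          exact this
        simpa [norm_eq_zero] using this
      have hzero : ∀ x, h t x = 0 := by
        intro x
        rw [hrepro _ htV x]
        rw [integral_congr_ae (g := fun _ : ℝ => (0:ℂ)) ?_, integral_zero]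
        filter_upwards [hae0] with s hs
        simp only [Pi.zero_apply] at hs
        rw [hs, zero_mul]
      apply hns
      have : (fun n : ℤ => ‖h t (t + (n:ℝ)*T)‖ ^ 2) = fun _ => 0 := by
        funext n; rw [hzero]; simp
      rw [this]
      exact summable_zero
    have hDof : Dd t = ENNReal.ofReal (∑' n : ℤ, ‖h t (t + (n:ℝ)*T)‖ ^ 2) := by
      rw [ENNReal.ofReal_tsum_of_nonneg hnn hsumm]
      exact tsum_congr fun n => by
        rw [ENNReal.ofReal_pow (norm_nonneg _), ofReal_norm, enorm_eq_nnnorm]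
    have hJof : J t = ENNReal.ofReal (∫ s, ‖h t s‖ ^ 2) := (ofReal_integral_norm_sq hmem2).symm
    constructor
    · rw [hJof, hDof, ← ENNReal.ofReal_mul hA.le]
      exact ENNReal.ofReal_le_ofReal hlow
    · rw [hJof, hDof, ← ENNReal.ofReal_mul hB.le]
      exact ENNReal.ofReal_le_ofReal hup
  -- measurability of the diagonal terms
  have hDmeas : ∀ n : ℤ, AEMeasurable (fun t => (‖h t (t + (n:ℝ)*T)‖₊ : ℝ≥0∞) ^ 2) μT :=
    fun n => (hdiag ((n:ℝ)*T)).enorm.pow_const 2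
  have hDint : ∫⁻ t, Dd t ∂μT = ∑' n : ℤ, ∫⁻ t, (‖h t (t + (n:ℝ)*T)‖₊ : ℝ≥0∞) ^ 2 ∂μT :=
    lintegral_tsum hDmeas
  -- change of variables in each summand
  have hcov2 : ∀ n : ℤ, ∫⁻ t, (‖h t (t + (n:ℝ)*T)‖₊ : ℝ≥0∞) ^ 2 ∂μT
      = ∫⁻ x in Set.Ioo ((n:ℝ)*T) ((n:ℝ)*T + T), (‖g x‖₊ : ℝ≥0∞) ^ 2 := by
    intro n
    have hpre : (fun x : ℝ => x + (n:ℝ)*T) ⁻¹' (Set.Ioo ((n:ℝ)*T) ((n:ℝ)*T + T)) =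
        Set.Ioo 0 T := by
      ext x
      simp only [Set.mem_preimage, Set.mem_Ioo]
      constructor
      · rintro ⟨h1, h2⟩; constructor <;> linarith
      · rintro ⟨h1, h2⟩; constructor <;> linarith
    have hstep := (measurePreserving_add_right volume ((n:ℝ)*T)).setLIntegral_comp_preimage_emb
      (measurableEmbedding_addRight ((n:ℝ)*T))
      (fun x => (‖h (x - (n:ℝ)*T) x‖₊ : ℝ≥0∞) ^ 2) (Set.Ioo ((n:ℝ)*T) ((n:ℝ)*T + T))
    rw [hpre] at hstep
    have hL : ∫⁻ t in Set.Ioo (0:ℝ) T, (‖h (t + (n:ℝ)*T - (n:ℝ)*T) (t + (n:ℝ)*T)‖₊ : ℝ≥0∞) ^ 2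
        = ∫⁻ t, (‖h t (t + (n:ℝ)*T)‖₊ : ℝ≥0∞) ^ 2 ∂μT := by
      rw [hμT]
      exact lintegral_congr fun t => by rw [add_sub_cancel_right]
    rw [← hL, hstep]
    apply lintegral_congr_ae
    filter_upwards [ae_restrict_mem measurableSet_Ioo] with x hx
    rw [hgval n x hx]
  have hIg : ∫⁻ t, Dd t ∂μT = ∫⁻ x, (‖g x‖₊ : ℝ≥0∞) ^ 2 := by
    rw [hDint]
    rw [tsum_congr hcov2]
    rw [← lintegral_iUnion (fun n => measurableSet_Ioo) hdisj]
    rw [Measure.restrict_congr_set hcover, Measure.restrict_univ]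
  -- the h-side integral
  set I2 : ℝ≥0∞ := ∫⁻ p : ℝ × ℝ, (‖Function.uncurry h p‖₊ : ℝ≥0∞) ^ 2 with hI2
  have hJint : ∫⁻ t, J t ∂μT = I2 := by
    have h2 : I2 = ∫⁻ t, J t ∂(volume : Measure ℝ) := by
      rw [hI2, MeasureTheory.Measure.volume_eq_prod ℝ ℝ,
        MeasureTheory.lintegral_prod _ ?_]
      · exact lintegral_congr fun t => lintegral_congr fun s => rfl
      · exact (hh.1.enorm.pow_const 2).mono_measure (le_of_eq (MeasureTheory.Measure.volume_eq_prod ℝ ℝ).symm)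
    have h1 : ∫⁻ t, J t ∂(volume : Measure ℝ) = ∫⁻ t, J t ∂μT := by
      rw [hμT, Measure.restrict_congr_set (Ioo_ae_eq_Icc (μ := volume) (a := (0:ℝ)) (b := T))]
      rw [← lintegral_indicator measurableSet_Icc]
      apply lintegral_congr fun t => ?_
      by_cases ht : t ∈ Set.Icc (0:ℝ) T
      · rw [Set.indicator_of_mem ht]
      · rw [Set.indicator_of_notMem ht]
        have : ∀ s, h t s = 0 := fun s => hsupp t s ht
        simp only [hJ, this]
        simp
    rw [← h1, ← h2]
  -- main inequalities in ℝ≥0∞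
  have hlowE : ENNReal.ofReal A * I2 ≤ ∫⁻ x, (‖g x‖₊ : ℝ≥0∞) ^ 2 := by
    rw [← hIg, ← hJint, ← lintegral_const_mul' _ _ ENNReal.ofReal_ne_top]
    exact lintegral_mono_ae (hframe'.mono fun t ht => ht.1)
  have hupE : (∫⁻ x, (‖g x‖₊ : ℝ≥0∞) ^ 2) ≤ ENNReal.ofReal B * I2 := by
    rw [← hIg, ← hJint, ← lintegral_const_mul' _ _ ENNReal.ofReal_ne_top]
    exact lintegral_mono_ae (hframe'.mono fun t ht => ht.2)
  -- finiteness
  have hI2ne : I2 ≠ ⊤ := by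
    rw [hI2, ← ofReal_integral_norm_sq hh]
    exact ENNReal.ofReal_ne_top
  have hGne : (∫⁻ x, (‖g x‖₊ : ℝ≥0∞) ^ 2) ≠ ⊤ :=
    ne_top_of_le_ne_top (ENNReal.mul_ne_top ENNReal.ofReal_ne_top hI2ne) hupE
  -- convert to real integrals
  have hRconv : ∫ p : ℝ × ℝ, ‖Function.uncurry h p‖ ^ 2 = I2.toReal := by
    rw [hI2, ← ofReal_integral_norm_sq hh, ENNReal.toReal_ofReal
      (integral_nonneg fun p => sq_nonneg _)]
  have hLconv : ∫ x, ‖g x‖ ^ 2 = (∫⁻ x, (‖g x‖₊ : ℝ≥0∞) ^ 2).toReal := by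
    rw [integral_eq_lintegral_of_nonneg_ae (Eventually.of_forall fun x => sq_nonneg _)
      ((continuous_pow 2).comp_aestronglyMeasurable hGae.norm)]
    congr 1
    exact lintegral_congr fun x => by
      rw [ENNReal.ofReal_pow (norm_nonneg _), ofReal_norm, enorm_eq_nnnorm]
  constructor
  · calc A * ∫ p : ℝ × ℝ, ‖Function.uncurry h p‖ ^ 2
        = (ENNReal.ofReal A * I2).toReal := by
          rw [hRconv, ENNReal.toReal_mul, ENNReal.toReal_ofReal hA.le]
      _ ≤ (∫⁻ x, (‖g x‖₊ : ℝ≥0∞) ^ 2).toReal := ENNReal.toReal_mono hGne hlowE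
      _ = ∫ x, ‖g x‖ ^ 2 := hLconv.symm
  · calc (∫ x, ‖g x‖ ^ 2)
        = (∫⁻ x, (‖g x‖₊ : ℝ≥0∞) ^ 2).toReal := hLconv
      _ ≤ (ENNReal.ofReal B * I2).toReal :=
          ENNReal.toReal_mono (ENNReal.mul_ne_top ENNReal.ofReal_ne_top hI2ne) hupE
      _ = B * ∫ p : ℝ × ℝ, ‖Function.uncurry h p‖ ^ 2 := by
          rw [hRconv, ENNReal.toReal_mul, ENNReal.toReal_ofReal hB.le]
end
end
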